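/- For integers 1 ≤ ν ≤ j, the greatest common divisor of the two products (j−ν+1)(j−ν+2)⋯j and (j+1)(j+2)⋯(j+ν) (each a product of ν consecutive integers) divides (2ν−1)!. -/

import Mathlib

open Finset Nat

/-- If `x / q < n / q` then the multiple `q * (n / q)` exceeds `x`. -/
lemma aux_lt_mul_div {q x n : ℕ} (hq : 0 < q) (h : x / q < n / q) :
    x < q * (n / q) := by
  have h2 : q * (x / q + 1) ≤ q * (n / q) := Nat.mul_le_mul_left q h
  have h3 : x < q * (x / q + 1) := by
    have h4 := Nat.div_add_mod x q
    have h5 := Nat.mod_lt x hq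
    calc x = q * (x / q) + x % q := h4.symm
    _ < q * (x / q) + q := Nat.add_lt_add_left h5 _
    _ = q * (x / q + 1) := by ring
  exact lt_of_lt_of_le h3 h2

/-- Two "tail" indices cannot produce multiples on both sides of `j`. -/
lemma aux_key {p i1 i2 ν j : ℕ} (hp : 2 ≤ p) (_hν : 1 ≤ ν) (hj : ν ≤ j)
    (h1q : 2 * ν ≤ p ^ i1) (h2q : 2 * ν ≤ p ^ i2)
    (h1 : (j - ν) / p ^ i1 < j / p ^ i1) (h2 : j / p ^ i2 < (j + ν) / p ^ i2) :
    False := by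
  have hq1 : 0 < p ^ i1 := Nat.pow_pos (by omega)
  have hq2 : 0 < p ^ i2 := Nat.pow_pos (by omega)
  set N1 := p ^ i1 * (j / p ^ i1) with hN1def
  set N2 := p ^ i2 * ((j + ν) / p ^ i2) with hN2def
  have hN1u : N1 ≤ j := Nat.mul_div_le j _
  have hN1l : j - ν < N1 := aux_lt_mul_div hq1 h1
  have hN2u : N2 ≤ j + ν := Nat.mul_div_le _ _
  have hN2l : j < N2 := aux_lt_mul_div hq2 h2
  set q := p ^ (min i1 i2) with hqdef
  have hd1 : q ∣ N1 := Dvd.dvd.mul_right (pow_dvd_pow p (min_le_left _ _)) _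
  have hd2 : q ∣ N2 := Dvd.dvd.mul_right (pow_dvd_pow p (min_le_right _ _)) _
  have hqge : 2 * ν ≤ q := by
    rcases le_total i1 i2 with h | h
    · rw [hqdef, min_eq_left h]; exact h1q
    · rw [hqdef, min_eq_right h]; exact h2q
  have hdvd : q ∣ N2 - N1 := Nat.dvd_sub hd2 hd1
  have hle : q ≤ N2 - N1 := Nat.le_of_dvd (by omega) hdvd
  omega

/-- Term-wise bound for small moduli. -/
lemma aux_term {q ν n : ℕ} (hν : 1 ≤ ν) (hq : 0 < q) (hq2 : q ≤ 2 * ν - 1) :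
    (n + ν) / q ≤ n / q + (2 * ν - 1) / q := by
  have hstep : (ν - 1) / q + 1 ≤ (2 * ν - 1) / q := by
    rw [Nat.le_div_iff_mul_le hq, add_mul, one_mul]
    have h := Nat.div_mul_le_self (ν - 1) q
    rcases le_or_gt q ν with h' | h'
    · generalize (ν - 1) / q * q = t at h ⊢
      omega
    · have h0 : (ν - 1) / q = 0 := Nat.div_eq_of_lt (by omega)
      rw [h0]; omega
  have hA : (n + ν) / q ≤ n / q + ((ν - 1) / q + 1) := by
    have hlt : (n + ν) / q < n / q + (ν - 1) / q + 2 := by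
      rw [Nat.div_lt_iff_lt_mul hq]
      have e1 := Nat.div_add_mod n q
      have e2 := Nat.div_add_mod (ν - 1) q
      have m1 := Nat.mod_lt n hq
      have m2 := Nat.mod_lt (ν - 1) hq
      have hexp : (n / q + (ν - 1) / q + 2) * q
          = q * (n / q) + q * ((ν - 1) / q) + 2 * q := by ring
      rw [hexp]
      generalize q * (n / q) = X at e1 ⊢
      generalize q * ((ν - 1) / q) = Y at e2 ⊢
      omega
    omega
  omega

/-- `m ! * ((m+1) ⋯ n) = n !`. -/
lemma aux_prod (m n : ℕ) (h : m ≤ n) :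
    m ! * ∏ i ∈ Finset.Icc (m + 1) n, i = n ! := by
  have h1 : ∀ k : ℕ, (∏ i ∈ Finset.Ioc 0 k, i) = k ! := by
    intro k
    rw [← Finset.Icc_add_one_left_eq_Ioc, ← Finset.Ico_add_one_right_eq_Icc]
    exact Finset.prod_Ico_id_eq_factorial k
  have h3 : Finset.Icc (m + 1) n = Finset.Ioc m n := by rw [Finset.Icc_add_one_left_eq_Ioc]
  rw [← h1 m, ← h1 n, h3]
  exact Finset.prod_Ioc_consecutive (fun i => i) (Nat.zero_le m) h

/-- For integers `1 ≤ ν ≤ j`, the gcd of the products `(j−ν+1)⋯j` and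
`(j+1)⋯(j+ν)` divides `(2ν−1)!`. -/
theorem stmt3 (ν j : ℕ) (hν : 1 ≤ ν) (hj : ν ≤ j) :
    Nat.gcd (∏ i ∈ Finset.Icc (j - ν + 1) j, i) (∏ i ∈ Finset.Icc (j + 1) (j + ν), i) ∣
      (2 * ν - 1).factorial := by
  set A := ∏ i ∈ Finset.Icc (j - ν + 1) j, i with hA
  set B := ∏ i ∈ Finset.Icc (j + 1) (j + ν), i with hB
  have hApos : 0 < A := Finset.prod_pos (fun i hi => by
    have := (Finset.mem_Icc.mp hi).1; omega)
  have hBpos : 0 < B := Finset.prod_pos (fun i hi => by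
    have := (Finset.mem_Icc.mp hi).1; omega)
  have hfac1 : (j - ν)! * A = j ! := by
    have := aux_prod (j - ν) j (by omega)
    rwa [show j - ν + 1 = j - ν + 1 from rfl] at this
  have hfac2 : j ! * B = (j + ν)! := aux_prod j (j + ν) (by omega)
  have hgcd0 : Nat.gcd A B ≠ 0 := Nat.gcd_ne_zero_left (by omega)
  rw [← Nat.factorization_le_iff_dvd hgcd0 (Nat.factorial_ne_zero _),
    Nat.factorization_gcd (by omega) (by omega)]
  rw [Finsupp.le_def]
  intro p
  rw [Finsupp.inf_apply]
  by_cases hp : p.Prime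
  · haveI : Fact p.Prime := ⟨hp⟩
    have hp2 : 2 ≤ p := hp.two_le
    -- Legendre
    set b := j + ν + 1 with hbdef
    have hS : ∀ n : ℕ, n ≤ j + ν →
        (n !).factorization p = ∑ i ∈ Finset.Ico 1 b, n / p ^ i := by
      intro n hn
      rw [Nat.factorization_def _ hp]
      exact padicValNat_factorial (lt_of_le_of_lt (Nat.log_le_self p n) (by omega))
    have eq1 : ((j - ν)!).factorization p + A.factorization p = (j !).factorization p := by
      rw [← hfac1, Nat.factorization_mul (Nat.factorial_ne_zero _) (by omega)]
      simp
    have eq2 : (j !).factorization p + B.factorization p = ((j + ν)!).factorization p := by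
      rw [← hfac2, Nat.factorization_mul (Nat.factorial_ne_zero _) (by omega)]
      simp
    rw [hS (j - ν) (by omega)] at eq1
    rw [hS j (by omega)] at eq1 eq2
    rw [hS (j + ν) (by omega)] at eq2
    rw [hS (2 * ν - 1) (by omega)]
    have hqpos : ∀ i : ℕ, 0 < p ^ i := fun i => Nat.pow_pos (by omega)
    by_cases hT : ∃ i ∈ Finset.Ico 1 b, 2 * ν ≤ p ^ i ∧ j / p ^ i < (j + ν) / p ^ i
    · -- tail contributes to B-side, so A-side is bounded
      obtain ⟨i2, _, hq2, hb2⟩ := hT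
      have hsum : (∑ i ∈ Finset.Ico 1 b, j / p ^ i)
          ≤ ∑ i ∈ Finset.Ico 1 b, ((j - ν) / p ^ i + (2 * ν - 1) / p ^ i) := by
        apply Finset.sum_le_sum
        intro i _
        rcases le_or_gt (2 * ν) (p ^ i) with hbig | hsmall
        · have hna : ¬ ((j - ν) / p ^ i < j / p ^ i) := fun hc =>
            aux_key hp2 hν hj hbig hq2 hc hb2
          exact le_trans (Nat.le_of_not_lt hna) (Nat.le_add_right _ _)
        · have := aux_term (q := p ^ i) (ν := ν) (n := j - ν) hν (hqpos i) (by omega)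
          rwa [show j - ν + ν = j by omega] at this
      rw [Finset.sum_add_distrib] at hsum
      refine le_trans (min_le_left _ _) ?_
      omega
    · push_neg at hT
      have hsum : (∑ i ∈ Finset.Ico 1 b, (j + ν) / p ^ i)
          ≤ ∑ i ∈ Finset.Ico 1 b, (j / p ^ i + (2 * ν - 1) / p ^ i) := by
        apply Finset.sum_le_sum
        intro i hi
        rcases le_or_gt (2 * ν) (p ^ i) with hbig | hsmall
        · exact le_trans (hT i hi hbig) (Nat.le_add_right _ _)
        · exact aux_term hν (hqpos i) (by omega)
      rw [Finset.sum_add_distrib] at hsum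
      refine le_trans (min_le_right _ _) ?_
      omega
  · rw [Nat.factorization_eq_zero_of_not_prime _ hp]
    simp
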